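/- Let A, B, V ∈ M_m(ℝ) and let C ∈ M_m(ℝ) be invertible. Suppose that for some integer n ≥ 0 the matrix Z_n = {(4B − A²) A^(n)} has simple spectrum, i.e. its characteristic polynomial has m pairwise distinct (complex) roots. Then the conditions {(4B − A²) A^(k) (CVC⁻¹ − A)} = 0 for k = 0, 1, …, m² − 1 hold if and only if [B, CVC⁻¹ − A] = 0 and [A, CVC⁻¹] = 0. -/

import Mathlib

open Matrix Polynomial

/-- The iterated commutator `{Z A^(n)}`: `{Z A^(0)} = Z`,
`{Z A^(n+1)} = [{Z A^(n)}, A]` where `[X, Y] = X*Y - Y*X`. -/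
def itComm {m : ℕ} (Z A : Matrix (Fin m) (Fin m) ℝ) : ℕ → Matrix (Fin m) (Fin m) ℝ
  | 0 => Z
  | n + 1 => itComm Z A n * A - A * itComm Z A n

namespace Stmt14Aux

lemma itComm_zero {m : ℕ} (Z A : Matrix (Fin m) (Fin m) ℝ) : itComm Z A 0 = Z := rfl

lemma itComm_succ {m : ℕ} (Z A : Matrix (Fin m) (Fin m) ℝ) (n : ℕ) :
    itComm Z A (n + 1) = itComm Z A n * A - A * itComm Z A n := rfl

/-- Evaluation of the characteristic polynomial. -/
lemma charpoly_eval {m : ℕ} {K : Type} [Field K] (M : Matrix (Fin m) (Fin m) K) (μ : K) :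
    M.charpoly.eval μ = (Matrix.scalar (Fin m) μ - M).det := by
  rw [Matrix.charpoly, _root_.eval_det, matPolyEquiv_charmatrix]
  simp

lemma exists_eigen {m : ℕ} {M : Matrix (Fin m) (Fin m) ℂ} {μ : ℂ}
    (h : M.charpoly.IsRoot μ) : ∃ v, v ≠ 0 ∧ M *ᵥ v = μ • v := by
  have h0 : (Matrix.scalar (Fin m) μ - M).det = 0 := by
    rw [← charpoly_eval]; exact h
  obtain ⟨v, hv0, hv⟩ := Matrix.exists_mulVec_eq_zero_iff.mpr h0
  refine ⟨v, hv0, ?_⟩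
  have h1 : Matrix.scalar (Fin m) μ *ᵥ v - M *ᵥ v = 0 := by
    rw [← Matrix.sub_mulVec]; exact hv
  have h2 : Matrix.scalar (Fin m) μ *ᵥ v = μ • v := by
    rw [Matrix.scalar_apply]
    funext i
    simp [Matrix.mulVec_diagonal]
  rw [h2] at h1
  exact (sub_eq_zero.mp h1).symm

/-- The key complex lemma: if `Z` has `m` distinct eigenvalues, `W` commutes with `Z`, and
`[A, W]` commutes with `Z`, then `[A, W] = 0`. -/
lemma key {m : ℕ} (hm : 0 < m) (Z W A : Matrix (Fin m) (Fin m) ℂ)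
    (hcard : Z.charpoly.roots.toFinset.card = m)
    (hZW : Z * W = W * Z)
    (hZD : Z * (A * W - W * A) = (A * W - W * A) * Z) :
    A * W - W * A = 0 := by
  classical
  set R : Finset ℂ := Z.charpoly.roots.toFinset with hR
  have hroot : ∀ μ : R, Z.charpoly.IsRoot (μ : ℂ) := by
    rintro ⟨μ, hμ⟩
    have := Multiset.mem_toFinset.mp hμ
    exact (Polynomial.mem_roots'.mp this).2
  have hev : ∀ μ : R, ∃ v, v ≠ 0 ∧ Z *ᵥ v = (μ : ℂ) • v := fun μ => exists_eigen (hroot μ)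
  choose v hv0 hvZ using hev
  have hind : LinearIndependent ℂ v := by
    refine Module.End.eigenvectors_linearIndependent' (Matrix.mulVecLin Z)
      (fun μ : R => (μ : ℂ)) Subtype.coe_injective v (fun μ => ⟨?_, hv0 μ⟩)
    rw [Module.End.mem_eigenspace_iff]
    simpa using hvZ μ
  have hcardR : Fintype.card R = m := by rw [Fintype.card_coe]; exact hcard
  haveI : Nonempty R := by
    rw [← Fintype.card_pos_iff, hcardR]; exact hm
  have hfr : Fintype.card R = Module.finrank ℂ (Fin m → ℂ) := by
    rw [hcardR, Module.finrank_fin_fun]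
  let b : Module.Basis R ℂ (Fin m → ℂ) := basisOfLinearIndependentOfCardEqFinrank hind hfr
  have hb : ∀ i, b i = v i := fun i => by
    rw [coe_basisOfLinearIndependentOfCardEqFinrank]
  have hsum : ∀ x : Fin m → ℂ, x = ∑ j, b.repr x j • v j := by
    intro x
    conv_lhs => rw [← b.sum_repr x]
    exact Finset.sum_congr rfl fun j _ => by rw [hb]
  -- If X commutes with Z then each v i is an eigenvector of X.
  have comm : ∀ (X : Matrix (Fin m) (Fin m) ℂ), Z * X = X * Z →
      ∀ i : R, X *ᵥ v i = (b.repr (X *ᵥ v i) i) • v i := by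
    intro X hX i
    set x := X *ᵥ v i with hx
    have hZx : Z *ᵥ x = (i : ℂ) • x := by
      rw [hx, Matrix.mulVec_mulVec, hX, ← Matrix.mulVec_mulVec, hvZ, Matrix.mulVec_smul]
    have e1 : Z *ᵥ x = ∑ j, (b.repr x j * (j : ℂ)) • v j := by
      conv_lhs => rw [hsum x]
      rw [show ∀ y, Z *ᵥ y = Z.mulVecLin y from fun _ => rfl, map_sum]
      refine Finset.sum_congr rfl fun j _ => ?_
      rw [LinearMap.map_smul, Matrix.mulVecLin_apply, hvZ, smul_smul]
    have e2 : (i : ℂ) • x = ∑ j, ((i : ℂ) * b.repr x j) • v j := by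
      conv_lhs => rw [hsum x]
      rw [Finset.smul_sum]
      exact Finset.sum_congr rfl fun j _ => by rw [smul_smul]
    have h1 : ∑ j, (b.repr x j * (j : ℂ) - (i : ℂ) * b.repr x j) • v j = 0 := by
      rw [Finset.sum_congr rfl fun j _ => sub_smul (b.repr x j * (j : ℂ))
        ((i : ℂ) * b.repr x j) (v j), Finset.sum_sub_distrib, ← e1, ← e2, hZx, sub_self]
    have hco := Fintype.linearIndependent_iff.mp hind _ h1
    have hzero : ∀ j : R, j ≠ i → b.repr x j = 0 := by
      intro j hj
      have := hco j
      have hne : (j : ℂ) - (i : ℂ) ≠ 0 := by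
        refine sub_ne_zero.mpr ?_
        exact fun hc => hj (Subtype.coe_injective hc)
      have : b.repr x j * ((j : ℂ) - (i : ℂ)) = 0 := by
        rw [mul_sub]; rw [mul_comm ((i:ℂ)) (b.repr x j)] at this; linear_combination this
      rcases mul_eq_zero.mp this with h | h
      · exact h
      · exact absurd h hne
    conv_lhs => rw [hsum x]
    rw [Finset.sum_eq_single_of_mem i (Finset.mem_univ i)]
    intro j _ hj
    rw [hzero j hj, zero_smul]
  -- eigen-coefficients of W and D
  set D := A * W - W * A with hD
  have hW : ∀ i : R, W *ᵥ v i = (b.repr (W *ᵥ v i) i) • v i := comm W hZW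
  have hDv0 : ∀ i : R, D *ᵥ v i = 0 := by
    intro i
    have hDvi := comm D hZD i
    set d := b.repr (D *ᵥ v i) i with hd
    set wi := b.repr (W *ᵥ v i) i with hwi
    set u := A *ᵥ v i with hu
    set c := fun j : R => b.repr u j with hc
    have hcalc : D *ᵥ v i = wi • u - W *ᵥ u := by
      rw [hD, Matrix.sub_mulVec, ← Matrix.mulVec_mulVec, ← Matrix.mulVec_mulVec, hW i,
        Matrix.mulVec_smul, ← hu, ← hwi]
    have hWu : W *ᵥ u = ∑ j, (c j * b.repr (W *ᵥ v j) j) • v j := by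
      conv_lhs => rw [hsum u]
      rw [show ∀ y, W *ᵥ y = W.mulVecLin y from fun _ => rfl, map_sum]
      refine Finset.sum_congr rfl fun j _ => ?_
      conv_lhs => rw [LinearMap.map_smul, Matrix.mulVecLin_apply, hW j, smul_smul]
    have hwiu : wi • u = ∑ j, (wi * c j) • v j := by
      conv_lhs => rw [hsum u]
      rw [Finset.smul_sum]
      exact Finset.sum_congr rfl fun j _ => by rw [smul_smul]
    have hsum0 : ∑ j, ((wi * c j - c j * b.repr (W *ᵥ v j) j)
        - (if j = i then d else 0)) • v j = 0 := by
      have : ∀ j : R, ((wi * c j - c j * b.repr (W *ᵥ v j) j) - (if j = i then d else 0)) • v j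
          = (wi * c j) • v j - (c j * b.repr (W *ᵥ v j) j) • v j
            - (if j = i then d else 0) • v j := by
        intro j; rw [sub_smul, sub_smul]
      rw [Finset.sum_congr rfl fun j _ => this j, Finset.sum_sub_distrib,
        Finset.sum_sub_distrib, ← hwiu, ← hWu, ← hcalc]
      have : ∑ j, (if j = i then d else 0) • v j = d • v i := by
        rw [Finset.sum_eq_single_of_mem i (Finset.mem_univ i)]
        · rw [if_pos rfl]
        · intro j _ hj; rw [if_neg hj, zero_smul]
      rw [this, ← hDvi, sub_self]
    have hco := Fintype.linearIndependent_iff.mp hind _ hsum0 i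
    rw [if_pos rfl] at hco
    have hd0 : d = 0 := by
      rw [← hwi] at hco
      linear_combination -hco
    rw [hDvi, hd0, zero_smul]
  -- conclude D = 0
  have hall : ∀ x, D *ᵥ x = 0 := by
    intro x
    conv_lhs => rw [hsum x]
    rw [show ∀ y, D *ᵥ y = D.mulVecLin y from fun _ => rfl, map_sum]
    refine Finset.sum_eq_zero fun j _ => ?_
    rw [LinearMap.map_smul, Matrix.mulVecLin_apply, hDv0 j, smul_zero]
  ext i j
  have := congrFun (hall (Pi.single j 1)) i
  rw [Matrix.mulVec_single] at this
  simpa using this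


/-- If the commutation conditions hold for `k < m^2`, they hold for all `k`. -/
lemma all_comm {m : ℕ} (hm : 0 < m) (Z A W : Matrix (Fin m) (Fin m) ℝ)
    (h : ∀ k < m ^ 2, itComm Z A k * W - W * itComm Z A k = 0) :
    ∀ k, itComm Z A k * W = W * itComm Z A k := by
  classical
  set f : Module.End ℝ (Matrix (Fin m) (Fin m) ℝ) :=
    LinearMap.mulRight ℝ A - LinearMap.mulLeft ℝ A with hf
  have hfapp : ∀ X, f X = X * A - A * X := by
    intro X
    rw [hf, LinearMap.sub_apply, LinearMap.mulRight_apply, LinearMap.mulLeft_apply]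
  have hit : ∀ k, itComm Z A k = (f ^ k) Z := by
    intro k
    induction k with
    | zero => rfl
    | succ k ih =>
      rw [itComm_succ, ih, pow_succ', Module.End.mul_apply, hfapp]
  have hd : Module.finrank ℝ (Matrix (Fin m) (Fin m) ℝ) = m ^ 2 := by
    rw [Module.finrank_matrix]
    simp [sq]
  set U : Submodule ℝ (Matrix (Fin m) (Fin m) ℝ) :=
    Submodule.span ℝ (Set.range fun i : Fin (m ^ 2) => (f ^ (i : ℕ)) Z) with hU
  have hCH : (f ^ (m ^ 2)) Z ∈ U := by
    have hp := LinearMap.aeval_self_charpoly f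
    have hdeg : f.charpoly.natDegree = m ^ 2 := by
      rw [LinearMap.charpoly_natDegree, hd]
    rw [Polynomial.aeval_eq_sum_range, hdeg] at hp
    have h0 := LinearMap.congr_fun hp Z
    rw [LinearMap.sum_apply, LinearMap.zero_apply] at h0
    rw [Finset.sum_range_succ] at h0
    have hc1 : f.charpoly.coeff (m ^ 2) = 1 := by
      rw [← hdeg]; exact f.charpoly_monic.coeff_natDegree
    rw [LinearMap.smul_apply, hc1, one_smul] at h0
    have heq : (f ^ (m ^ 2)) Z
        = -∑ i ∈ Finset.range (m ^ 2), (f.charpoly.coeff i • f ^ i) Z :=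
      eq_neg_of_add_eq_zero_right h0
    rw [heq]
    refine Submodule.neg_mem _ (Submodule.sum_mem _ fun i hi => ?_)
    rw [LinearMap.smul_apply]
    exact Submodule.smul_mem _ _
      (Submodule.subset_span ⟨⟨i, Finset.mem_range.mp hi⟩, rfl⟩)
  have hfU : ∀ x ∈ U, f x ∈ U := by
    intro x hx
    induction hx using Submodule.span_induction with
    | mem x hx =>
      obtain ⟨i, rfl⟩ := hx
      have : f ((f ^ (i : ℕ)) Z) = (f ^ ((i : ℕ) + 1)) Z :=
        ((LinearMap.congr_fun (pow_succ' f (i : ℕ)) Z).trans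
          (Module.End.mul_apply f (f ^ (i : ℕ)) Z)).symm
      show f ((f ^ (i : ℕ)) Z) ∈ U
      rw [this]
      by_cases hlt : (i : ℕ) + 1 < m ^ 2
      · exact Submodule.subset_span ⟨⟨(i : ℕ) + 1, hlt⟩, rfl⟩
      · have hi2 := i.2
        have : (i : ℕ) + 1 = m ^ 2 := by omega
        rw [this]; exact hCH
    | zero => rw [map_zero]; exact Submodule.zero_mem _
    | add x y _ _ ihx ihy => rw [map_add]; exact Submodule.add_mem _ ihx ihy
    | smul c x _ ihx => rw [_root_.map_smul]; exact Submodule.smul_mem _ _ ihx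
  have hall : ∀ k, (f ^ k) Z ∈ U := by
    intro k
    induction k with
    | zero =>
      exact Submodule.subset_span ⟨⟨0, by positivity⟩, rfl⟩
    | succ k ih =>
      have e : (f ^ (k + 1)) Z = f ((f ^ k) Z) :=
        (LinearMap.congr_fun (pow_succ' f k) Z).trans (Module.End.mul_apply f (f ^ k) Z)
      rw [e]
      exact hfU _ ih
  set S : Submodule ℝ (Matrix (Fin m) (Fin m) ℝ) :=
    LinearMap.ker (LinearMap.mulRight ℝ W - LinearMap.mulLeft ℝ W) with hS
  have hmemS : ∀ X : Matrix (Fin m) (Fin m) ℝ, X ∈ S ↔ X * W - W * X = 0 := by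
    intro X
    rw [hS, LinearMap.mem_ker, LinearMap.sub_apply, LinearMap.mulRight_apply,
      LinearMap.mulLeft_apply]
  have hUS : U ≤ S := by
    rw [hU, Submodule.span_le]
    rintro x ⟨i, rfl⟩
    rw [SetLike.mem_coe, hmemS]
    show (f ^ (i : ℕ)) Z * W - W * (f ^ (i : ℕ)) Z = 0
    rw [← hit]
    exact h i i.2
  intro k
  have := (hmemS _).mp (hUS (hall k))
  rw [← hit] at this
  exact sub_eq_zero.mp this

/-- If `W` commutes with `Z` and `A`, it commutes with all iterated commutators. -/
lemma comm_itComm {m : ℕ} (Z A W : Matrix (Fin m) (Fin m) ℝ)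
    (hZ : Z * W = W * Z) (hA : A * W = W * A) :
    ∀ k, itComm Z A k * W = W * itComm Z A k := by
  intro k
  induction k with
  | zero => exact hZ
  | succ k ih =>
    rw [itComm_succ]
    calc (itComm Z A k * A - A * itComm Z A k) * W
        = itComm Z A k * (A * W) - A * (itComm Z A k * W) := by noncomm_ring
      _ = itComm Z A k * (W * A) - A * (W * itComm Z A k) := by rw [hA, ih]
      _ = (itComm Z A k * W) * A - (A * W) * itComm Z A k := by noncomm_ring
      _ = (W * itComm Z A k) * A - (W * A) * itComm Z A k := by rw [hA, ih]
      _ = W * (itComm Z A k * A - A * itComm Z A k) := by noncomm_ring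

lemma A2_comm {m : ℕ} (A W : Matrix (Fin m) (Fin m) ℝ) (hAW : A * W = W * A) :
    A ^ 2 * W = W * A ^ 2 := by
  rw [pow_two, mul_assoc, hAW, ← mul_assoc, hAW, mul_assoc]

lemma zw_comm {m : ℕ} (A B W : Matrix (Fin m) (Fin m) ℝ)
    (hAW : A * W = W * A) (hBW : B * W = W * B) :
    ((4:ℝ) • B - A ^ 2) * W = W * ((4:ℝ) • B - A ^ 2) := by
  have hA2W := A2_comm A W hAW
  rw [sub_mul, mul_sub, smul_mul_assoc, mul_smul_comm, hBW, hA2W]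

lemma bw_comm {m : ℕ} (A B W : Matrix (Fin m) (Fin m) ℝ)
    (hAW : A * W = W * A)
    (hZW : ((4:ℝ) • B - A ^ 2) * W = W * ((4:ℝ) • B - A ^ 2)) :
    B * W = W * B := by
  have hA2W := A2_comm A W hAW
  have h4 : (4:ℝ) • (B * W - W * B)
      = (((4:ℝ) • B - A ^ 2) * W - W * ((4:ℝ) • B - A ^ 2)) + (A ^ 2 * W - W * A ^ 2) := by
    rw [sub_mul, mul_sub, smul_mul_assoc, mul_smul_comm, smul_sub]
    abel
  have h4' : (4:ℝ) • (B * W - W * B) = 0 := by rw [h4, hZW, hA2W]; simp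
  have h5 := (smul_eq_zero.mp h4').resolve_left (by norm_num : (4:ℝ) ≠ 0)
  exact sub_eq_zero.mp h5

end Stmt14Aux

/-- If for some `n ≥ 0` the matrix `Z_n = {(4B − A²) A^(n)}` has simple
spectrum (its characteristic polynomial has `m` pairwise distinct complex roots), then
`{(4B − A²) A^(k) (CVC⁻¹ − A)} = 0` for `k = 0, …, m² − 1` iff `[B, CVC⁻¹ − A] = 0` and
`[A, CVC⁻¹] = 0`. -/
theorem stmt_14 {m : ℕ} (A B V C : Matrix (Fin m) (Fin m) ℝ) (hC : IsUnit C)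
    (n : ℕ)
    (hsimple :
      ((itComm ((4:ℝ) • B - A ^ 2) A n).charpoly.map (algebraMap ℝ ℂ)).roots.toFinset.card = m) :
    (∀ k < m ^ 2,
        itComm ((4:ℝ) • B - A ^ 2) A k * (C * V * C⁻¹ - A)
          - (C * V * C⁻¹ - A) * itComm ((4:ℝ) • B - A ^ 2) A k = 0) ↔
      (B * (C * V * C⁻¹ - A) - (C * V * C⁻¹ - A) * B = 0 ∧
        A * (C * V * C⁻¹) - (C * V * C⁻¹) * A = 0) := by
  classical
  rcases Nat.eq_zero_or_pos m with hm | hm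
  · subst hm
    constructor
    · intro _
      exact ⟨Matrix.ext fun i _ => i.elim0, Matrix.ext fun i _ => i.elim0⟩
    · intro _ k _
      exact Matrix.ext fun i _ => i.elim0
  · set W : Matrix (Fin m) (Fin m) ℝ := C * V * C⁻¹ - A with hWdef
    set Z : Matrix (Fin m) (Fin m) ℝ := (4:ℝ) • B - A ^ 2 with hZdef
    have hsimple' : ((itComm Z A n).charpoly.map (algebraMap ℝ ℂ)).roots.toFinset.card = m := by
      rw [hZdef]; exact hsimple
    constructor
    · intro h
      have hall := Stmt14Aux.all_comm hm Z A W h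
      have hZnW := hall n
      have hZn1W := hall (n + 1)
      rw [Stmt14Aux.itComm_succ] at hZn1W
      set Zn := itComm Z A n with hZn
      have hZnD : Zn * (A * W - W * A) = (A * W - W * A) * Zn := by
        have e : Zn * (A * W - W * A) - (A * W - W * A) * Zn
            = ((Zn * A - A * Zn) * W - W * (Zn * A - A * Zn))
              - ((Zn * W - W * Zn) * A - A * (Zn * W - W * Zn)) := by noncomm_ring
        have h1 : (Zn * A - A * Zn) * W - W * (Zn * A - A * Zn) = 0 := sub_eq_zero.mpr hZn1W
        have h2 : Zn * W - W * Zn = 0 := sub_eq_zero.mpr hZnW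
        have h3 : Zn * (A * W - W * A) - (A * W - W * A) * Zn = 0 := by
          rw [e, h1, h2]; simp
        exact sub_eq_zero.mp h3
      have hAW : A * W = W * A := by
        have hcard : ((Zn.map (algebraMap ℝ ℂ)).charpoly).roots.toFinset.card = m := by
          rw [Matrix.charpoly_map]; exact hsimple'
        have hZWc : Zn.map (algebraMap ℝ ℂ) * W.map (algebraMap ℝ ℂ)
            = W.map (algebraMap ℝ ℂ) * Zn.map (algebraMap ℝ ℂ) := by
          rw [← Matrix.map_mul, ← Matrix.map_mul, hZnW]
        have hsubc : (A * W - W * A).map (algebraMap ℝ ℂ)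
            = A.map (algebraMap ℝ ℂ) * W.map (algebraMap ℝ ℂ)
              - W.map (algebraMap ℝ ℂ) * A.map (algebraMap ℝ ℂ) := by
          rw [Matrix.map_sub _ (fun a b => map_sub (algebraMap ℝ ℂ) a b),
            Matrix.map_mul, Matrix.map_mul]
        have hZDc : Zn.map (algebraMap ℝ ℂ)
              * (A.map (algebraMap ℝ ℂ) * W.map (algebraMap ℝ ℂ)
                - W.map (algebraMap ℝ ℂ) * A.map (algebraMap ℝ ℂ))
            = (A.map (algebraMap ℝ ℂ) * W.map (algebraMap ℝ ℂ)
                - W.map (algebraMap ℝ ℂ) * A.map (algebraMap ℝ ℂ))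
              * Zn.map (algebraMap ℝ ℂ) := by
          rw [← hsubc, ← Matrix.map_mul, ← Matrix.map_mul, hZnD]
        have hkey := Stmt14Aux.key hm (Zn.map (algebraMap ℝ ℂ)) (W.map (algebraMap ℝ ℂ))
          (A.map (algebraMap ℝ ℂ)) hcard hZWc hZDc
        rw [← hsubc] at hkey
        have hzero : A * W - W * A = 0 := by
          ext i j
          have hentry := congrFun (congrFun (congrArg (fun M : Matrix (Fin m) (Fin m) ℂ => (M : Matrix (Fin m) (Fin m) ℂ)) hkey) i) j
          have : (algebraMap ℝ ℂ) ((A * W - W * A) i j) = (algebraMap ℝ ℂ) 0 := by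
            simpa [Matrix.map_apply] using hentry
          simpa using (algebraMap ℝ ℂ).injective this
        exact sub_eq_zero.mp hzero
      refine ⟨?_, ?_⟩
      · have h0 := h 0 (pow_pos hm 2)
        rw [Stmt14Aux.itComm_zero] at h0
        have hZW0 : ((4:ℝ) • B - A ^ 2) * W = W * ((4:ℝ) • B - A ^ 2) := by
          rw [← hZdef]; exact sub_eq_zero.mp h0
        exact sub_eq_zero.mpr (Stmt14Aux.bw_comm A B W hAW hZW0)
      · have hCV : C * V * C⁻¹ = W + A := by rw [hWdef, sub_add_cancel]
        rw [hCV]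
        have e : A * (W + A) - (W + A) * A = A * W - W * A := by noncomm_ring
        rw [e, hAW, sub_self]
    · rintro ⟨hB, hA⟩ k hk
      have hBW : B * W = W * B := sub_eq_zero.mp hB
      have hAW : A * W = W * A := by
        have e : A * W - W * A = A * (C * V * C⁻¹) - C * V * C⁻¹ * A := by
          rw [hWdef]; noncomm_ring
        exact sub_eq_zero.mp (e.trans hA)
      have hZW : Z * W = W * Z := by
        rw [hZdef]; exact Stmt14Aux.zw_comm A B W hAW hBW
      exact sub_eq_zero.mpr (Stmt14Aux.comm_itComm Z A W hZW hAW k)
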